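/- Let $1<p\le 2$ and suppose the one-variable Laplace transform $\mathscr{L}g(x)=\int_0^\infty e^{-xt}g(t)\,dt$ satisfies $\|\mathscr{L}g\|_{L^{p'}(0,\infty)}\le C(p)\|g\|_{L^p(0,\infty)}$ for all nonnegative $g$, where $1/p+1/p'=1$. Then for $p_1,p_2\in(1,2]$, the bivariate Laplace transform $\mathscr{L}_2 f(x_1,x_2)=\int_0^\infty\int_0^\infty e^{-x_1t_1-x_2t_2}f(t_1,t_2)\,dt_1\,dt_2$ satisfies the permuted mixed norm inequality $\|\mathscr{L}_2 f\|_{L^{(p_1',p_2')}}\le C(p_1)C(p_2)\|f\|_{L^{(p_2,p_1)}}$ for all nonnegative measurable $f$ on $(0,\infty)^2$. -/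

import Mathlib

open MeasureTheory ENNReal Set

lemma minkowski_lintegral {α β : Type*} [MeasurableSpace α] [MeasurableSpace β]
    (μ : Measure α) (ν : Measure β) [SFinite μ] [SigmaFinite ν]
    {r : ℝ} (hr : 1 ≤ r) {F : α × β → ℝ≥0∞} (hF : Measurable F) :
    (∫⁻ y, (∫⁻ x, F (x, y) ∂μ) ^ r ∂ν) ^ (1 / r)
      ≤ ∫⁻ x, (∫⁻ y, F (x, y) ^ r ∂ν) ^ (1 / r) ∂μ := by
  have hr0 : (0:ℝ) < r := lt_of_lt_of_le one_pos hr
  rcases eq_or_lt_of_le hr with h1 | h1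
  · simp only [← h1, ENNReal.rpow_one, one_div_one]
    exact le_of_eq
      (lintegral_lintegral_swap (f := fun y x => F (x, y))
        (hF.comp measurable_swap).aemeasurable)
  -- r > 1 case
  set φ : β → ℝ≥0∞ := fun y => ∫⁻ x, F (x, y) ∂μ with hφ
  have hφm : Measurable φ := hF.lintegral_prod_left'
  set M : ℝ≥0∞ := ∫⁻ x, (∫⁻ y, F (x, y) ^ r ∂ν) ^ (1 / r) ∂μ with hM
  suffices h : (∫⁻ y, φ y ^ r ∂ν) ≤ M ^ r by
    calc (∫⁻ y, φ y ^ r ∂ν) ^ (1/r) ≤ (M ^ r) ^ (1/r) :=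
          ENNReal.rpow_le_rpow h (by positivity)
      _ = M := by rw [← ENNReal.rpow_mul, mul_one_div_cancel hr0.ne', ENNReal.rpow_one]
  have hconj : r.HolderConjugate (r / (r - 1)) := Real.HolderConjugate.conjExponent h1
  set q : ℝ := r / (r - 1) with hq
  have hconj' : q.HolderConjugate r := hconj.symm
  set ψ : ℕ → β → ℝ≥0∞ := fun n y =>
    (spanningSets ν n).indicator (fun y => min (φ y) n) y with hψ
  have hψm : ∀ n, Measurable (ψ n) := fun n =>
    (Measurable.min hφm measurable_const).indicator (measurableSet_spanningSets ν n)
  have hψle : ∀ n y, ψ n y ≤ φ y := by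
    intro n y
    by_cases h : y ∈ spanningSets ν n
    · simp only [hψ, indicator_of_mem h]; exact min_le_left _ _
    · simp [hψ, indicator_of_notMem h]
  have hψmono : Monotone ψ := by
    intro m n hmn y
    simp only [hψ]
    by_cases h : y ∈ spanningSets ν m
    · rw [indicator_of_mem h, indicator_of_mem (spanningSets_mono hmn h)]
      exact min_le_min le_rfl (by exact_mod_cast Nat.cast_le.mpr hmn)
    · simp [indicator_of_notMem h]
  have hψsup : ∀ y, ⨆ n, ψ n y = φ y := by
    intro y
    obtain ⟨n0, hn0⟩ : ∃ n, y ∈ spanningSets ν n := by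
      have h2 : y ∈ ⋃ n, spanningSets ν n := (iUnion_spanningSets ν) ▸ mem_univ y
      exact mem_iUnion.mp h2
    apply le_antisymm
    · exact iSup_le fun n => hψle n y
    · have key : ∀ n : ℕ, min (φ y) n ≤ ⨆ m, ψ m y := by
        intro n
        refine le_trans ?_ (le_iSup _ (max n n0))
        simp only [hψ]
        rw [indicator_of_mem (spanningSets_mono (le_max_right n n0) hn0)]
        exact min_le_min le_rfl (by exact_mod_cast Nat.cast_le.mpr (le_max_left n n0))
      have hsup : ⨆ n : ℕ, min (φ y) (n : ℝ≥0∞) = φ y := by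
        rw [← inf_iSup_eq]
        simp [ENNReal.iSup_natCast]
      calc φ y = ⨆ n : ℕ, min (φ y) n := hsup.symm
        _ ≤ ⨆ m, ψ m y := iSup_le key
  -- finiteness of each truncation
  have hψfin : ∀ n, (∫⁻ y, ψ n y ^ r ∂ν) < ∞ := by
    intro n
    have hb : ∀ y, ψ n y ^ r ≤ (spanningSets ν n).indicator (fun _ => (n : ℝ≥0∞) ^ r) y := by
      intro y
      by_cases h : y ∈ spanningSets ν n
      · rw [indicator_of_mem h]
        refine ENNReal.rpow_le_rpow ?_ hr0.le
        simp only [hψ, indicator_of_mem h]; exact min_le_right _ _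
      · simp [hψ, indicator_of_notMem h, ENNReal.zero_rpow_of_pos hr0]
    calc (∫⁻ y, ψ n y ^ r ∂ν)
        ≤ ∫⁻ y, (spanningSets ν n).indicator (fun _ => (n : ℝ≥0∞) ^ r) y ∂ν :=
          lintegral_mono hb
      _ = (n : ℝ≥0∞) ^ r * ν (spanningSets ν n) := by
          rw [lintegral_indicator (measurableSet_spanningSets ν n)]
          simp [Measure.restrict_apply, MeasurableSet.univ]
      _ < ∞ := ENNReal.mul_lt_top
          (ENNReal.rpow_lt_top_of_nonneg hr0.le (natCast_ne_top n))
          (measure_spanningSets_lt_top ν n)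
  -- the key bound for each truncation
  have hkey : ∀ n, (∫⁻ y, ψ n y ^ r ∂ν) ≤ M ^ r := by
    intro n
    set A : ℝ≥0∞ := ∫⁻ y, ψ n y ^ r ∂ν with hA
    rcases eq_or_ne A 0 with h0 | h0
    · simp [hA] at h0 ⊢; rw [h0]; exact zero_le
    have step1 : A ≤ A ^ (1/q) * M := by
      have e1 : ∀ y, ψ n y ^ r = ψ n y ^ (r - 1) * ψ n y := by
        intro y
        have h := ENNReal.rpow_add_of_nonneg (x := ψ n y) (r-1) 1
          (by linarith) zero_le_one
        rw [sub_add_cancel] at h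
        rw [h, ENNReal.rpow_one]
      calc A = ∫⁻ y, ψ n y ^ (r - 1) * ψ n y ∂ν := by rw [hA]; simp_rw [e1]
        _ ≤ ∫⁻ y, ψ n y ^ (r - 1) * φ y ∂ν :=
            lintegral_mono fun y => mul_le_mul_right (hψle n y) _
        _ = ∫⁻ y, ∫⁻ x, ψ n y ^ (r - 1) * F (x, y) ∂μ ∂ν := by
            congr 1; funext y
            have hcne : ψ n y ^ (r - 1) ≠ ∞ := by
              refine ENNReal.rpow_ne_top_of_nonneg (by linarith) ?_
              refine ne_top_of_le_ne_top (natCast_ne_top n) ?_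
              by_cases h : y ∈ spanningSets ν n
              · simp only [hψ, indicator_of_mem h]; exact min_le_right _ _
              · simp [hψ, indicator_of_notMem h]
            rw [lintegral_const_mul' _ _ hcne]
        _ = ∫⁻ x, ∫⁻ y, ψ n y ^ (r - 1) * F (x, y) ∂ν ∂μ := by
            refine (lintegral_lintegral_swap ?_).symm
            exact ((((hψm n).comp measurable_snd).pow measurable_const).mul hF).aemeasurable
        _ ≤ ∫⁻ x, (∫⁻ y, (ψ n y ^ (r - 1)) ^ q ∂ν) ^ (1/q) *
              (∫⁻ y, F (x, y) ^ r ∂ν) ^ (1/r) ∂μ := by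
            refine lintegral_mono fun x => ?_
            exact ENNReal.lintegral_mul_le_Lp_mul_Lq ν hconj'
              ((hψm n).pow measurable_const).aemeasurable
              (hF.comp measurable_prodMk_left).aemeasurable
        _ = A ^ (1/q) * M := by
            have e2 : ∀ y, (ψ n y ^ (r - 1)) ^ q = ψ n y ^ r := by
              intro y
              rw [← ENNReal.rpow_mul]
              have hr1 : r - 1 ≠ 0 := by linarith
              rw [hq]; congr 1; field_simp
            simp_rw [e2]
            rw [lintegral_const_mul' _ _
              (ENNReal.rpow_ne_top_of_nonneg (one_div_nonneg.mpr hconj'.nonneg) (hψfin n).ne)]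
    -- cancel A ^ (1/q)
    have hAfin : A ≠ ∞ := (hψfin n).ne
    have hq0 : (0:ℝ) < 1/q := one_div_pos.mpr hconj'.pos
    have hAq_ne_top : A ^ (1/q) ≠ ∞ := ENNReal.rpow_ne_top_of_nonneg hq0.le hAfin
    have hAq_ne_zero : A ^ (1/q) ≠ 0 := by
      simp [ENNReal.rpow_eq_zero_iff, h0, hAfin]
    have hsplit : A = A ^ (1/q) * A ^ (1/r) := by
      rw [← ENNReal.rpow_add_of_nonneg _ _ hq0.le (one_div_nonneg.mpr hr0.le)]
      rw [one_div, one_div, hconj'.inv_add_inv_eq_one, ENNReal.rpow_one]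
    have : A ^ (1/r) ≤ M := by
      nth_rewrite 1 [hsplit] at step1
      exact (ENNReal.mul_le_mul_iff_right hAq_ne_zero hAq_ne_top).mp step1
    calc A = (A ^ (1/r)) ^ r := by
          rw [← ENNReal.rpow_mul, one_div_mul_cancel hr0.ne', ENNReal.rpow_one]
      _ ≤ M ^ r := ENNReal.rpow_le_rpow this hr0.le
  -- monotone convergence
  have hmct : (∫⁻ y, φ y ^ r ∂ν) = ⨆ n, ∫⁻ y, ψ n y ^ r ∂ν := by
    rw [← lintegral_iSup (fun n => (hψm n).pow_const _)
      (fun m n hmn y => ENNReal.rpow_le_rpow (hψmono hmn y) hr0.le)]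
    congr 1; funext y
    rw [← hψsup y]
    exact Monotone.map_iSup_of_continuousAt
      (ENNReal.continuous_rpow_const.continuousAt)
      (ENNReal.monotone_rpow_of_nonneg hr0.le)
      (by simp [ENNReal.zero_rpow_of_pos hr0])
  rw [hmct]
  exact iSup_le hkey


/-- The bivariate Laplace transform satisfies a permuted mixed norm inequality,
given `L^p → L^{p'}` bounds for the one-variable Laplace transform. -/
theorem bivariate_laplace_permuted_mixed_norm
    (p1 p2 p1' p2' : ℝ) (hp1 : 1 < p1) (hp1le : p1 ≤ 2) (hp2 : 1 < p2) (hp2le : p2 ≤ 2)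
    (hc1 : 1 / p1 + 1 / p1' = 1) (hc2 : 1 / p2 + 1 / p2' = 1)
    (C1 C2 : ℝ≥0∞)
    (hL1 : ∀ g : ℝ → ℝ≥0∞, Measurable g →
      (∫⁻ x in Ioi (0 : ℝ),
          (∫⁻ t in Ioi (0 : ℝ), ENNReal.ofReal (Real.exp (-(x * t))) * g t) ^ p1') ^ (1 / p1')
        ≤ C1 * (∫⁻ t in Ioi (0 : ℝ), g t ^ p1) ^ (1 / p1))
    (hL2 : ∀ g : ℝ → ℝ≥0∞, Measurable g →
      (∫⁻ x in Ioi (0 : ℝ),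
          (∫⁻ t in Ioi (0 : ℝ), ENNReal.ofReal (Real.exp (-(x * t))) * g t) ^ p2') ^ (1 / p2')
        ≤ C2 * (∫⁻ t in Ioi (0 : ℝ), g t ^ p2) ^ (1 / p2))
    (f : ℝ × ℝ → ℝ≥0∞) (hf : Measurable f) :
    (∫⁻ x2 in Ioi (0 : ℝ), (∫⁻ x1 in Ioi (0 : ℝ),
        (∫⁻ t2 in Ioi (0 : ℝ), ∫⁻ t1 in Ioi (0 : ℝ),
            ENNReal.ofReal (Real.exp (-(x1 * t1 + x2 * t2))) * f (t1, t2)) ^ p1') ^ (p2' / p1'))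
      ^ (1 / p2')
      ≤ C1 * C2 *
        (∫⁻ t1 in Ioi (0 : ℝ),
            (∫⁻ t2 in Ioi (0 : ℝ), f (t1, t2) ^ p2) ^ (p1 / p2)) ^ (1 / p1) := by
  -- elementary exponent facts
  have hp1pos : (0:ℝ) < p1 := by linarith
  have hp2pos : (0:ℝ) < p2 := by linarith
  have h1 : (1:ℝ)/p1 < 1 := by rw [div_lt_one hp1pos]; exact hp1
  have h2 : (1:ℝ)/p2 < 1 := by rw [div_lt_one hp2pos]; exact hp2
  have hp1'pos : (0:ℝ) < p1' := by
    have h3 : (0:ℝ) < 1/p1' := by linarith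
    exact (one_div_pos).mp h3
  have hp2'pos : (0:ℝ) < p2' := by
    have h3 : (0:ℝ) < 1/p2' := by linarith
    exact (one_div_pos).mp h3
  have h12 : p1 ≤ p2' := by
    have ha : (1:ℝ)/2 ≤ 1/p1 := one_div_le_one_div_of_le hp1pos hp1le
    have hb : (1:ℝ)/2 ≤ 1/p2 := one_div_le_one_div_of_le hp2pos hp2le
    have hc : (1:ℝ)/p2' ≤ 1/p1 := by linarith
    exact le_of_one_div_le_one_div hp2'pos hc
  set r : ℝ := p2' / p1 with hrdef
  have hr1 : (1:ℝ) ≤ r := (one_le_div hp1pos).mpr h12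
  have hrpos : (0:ℝ) < r := lt_of_lt_of_le one_pos hr1
  -- the partial Laplace transform in the second variable
  set H : ℝ × ℝ → ℝ≥0∞ := fun p =>
    ∫⁻ t2 in Ioi (0 : ℝ), ENNReal.ofReal (Real.exp (-(p.2 * t2))) * f (p.1, t2) with hH
  have hHm : Measurable H := by
    apply Measurable.lintegral_prod_right'
      (f := fun q : (ℝ × ℝ) × ℝ => ENNReal.ofReal (Real.exp (-(q.1.2 * q.2))) * f (q.1.1, q.2))
    apply Measurable.mul
    · exact ENNReal.measurable_ofReal.comp
        (((measurable_fst.snd).mul measurable_snd).neg.exp)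
    · exact hf.comp ((measurable_fst.fst).prodMk measurable_snd)
  -- rewrite the inner double integral as an iterated one-variable transform
  have key : ∀ x1 x2 : ℝ,
      (∫⁻ t2 in Ioi (0 : ℝ), ∫⁻ t1 in Ioi (0 : ℝ),
          ENNReal.ofReal (Real.exp (-(x1 * t1 + x2 * t2))) * f (t1, t2))
        = ∫⁻ t1 in Ioi (0 : ℝ), ENNReal.ofReal (Real.exp (-(x1 * t1))) * H (t1, x2) := by
    intro x1 x2
    have e : ∀ t2 t1 : ℝ, ENNReal.ofReal (Real.exp (-(x1 * t1 + x2 * t2))) * f (t1, t2)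
        = ENNReal.ofReal (Real.exp (-(x1 * t1)))
            * (ENNReal.ofReal (Real.exp (-(x2 * t2))) * f (t1, t2)) := by
      intro t2 t1
      rw [show -(x1 * t1 + x2 * t2) = -(x1 * t1) + -(x2 * t2) by ring, Real.exp_add,
        ENNReal.ofReal_mul (Real.exp_nonneg _), mul_assoc]
    simp_rw [e]
    rw [lintegral_lintegral_swap]
    · refine lintegral_congr fun t1 => ?_
      rw [lintegral_const_mul' _ _ ENNReal.ofReal_ne_top]
    · apply Measurable.aemeasurable
      apply Measurable.mul
      · exact ENNReal.measurable_ofReal.comp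
          ((measurable_const.mul measurable_snd).neg.exp)
      · apply Measurable.mul
        · exact ENNReal.measurable_ofReal.comp
            ((measurable_const.mul measurable_fst).neg.exp)
        · exact hf.comp (measurable_snd.prodMk measurable_fst)
  simp_rw [key]
  -- Step 1: apply the one-dimensional bound `hL1` in the first variable
  have step1 : ∀ x2 : ℝ,
      (∫⁻ x1 in Ioi (0 : ℝ),
          (∫⁻ t1 in Ioi (0 : ℝ), ENNReal.ofReal (Real.exp (-(x1 * t1))) * H (t1, x2)) ^ p1')
          ^ (p2' / p1')
        ≤ C1 ^ p2' * (∫⁻ t1 in Ioi (0 : ℝ), H (t1, x2) ^ p1) ^ r := by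
    intro x2
    have hg : Measurable fun t1 => H (t1, x2) :=
      hHm.comp (measurable_id.prodMk measurable_const)
    have h := hL1 (fun t1 => H (t1, x2)) hg
    calc (∫⁻ x1 in Ioi (0 : ℝ),
          (∫⁻ t1 in Ioi (0 : ℝ), ENNReal.ofReal (Real.exp (-(x1 * t1))) * H (t1, x2)) ^ p1')
          ^ (p2' / p1')
        = ((∫⁻ x1 in Ioi (0 : ℝ),
          (∫⁻ t1 in Ioi (0 : ℝ), ENNReal.ofReal (Real.exp (-(x1 * t1))) * H (t1, x2)) ^ p1')
          ^ (1 / p1')) ^ p2' := by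
          rw [← ENNReal.rpow_mul]
          congr 1
          field_simp
      _ ≤ (C1 * (∫⁻ t1 in Ioi (0 : ℝ), H (t1, x2) ^ p1) ^ (1 / p1)) ^ p2' :=
          ENNReal.rpow_le_rpow h hp2'pos.le
      _ = C1 ^ p2' * (∫⁻ t1 in Ioi (0 : ℝ), H (t1, x2) ^ p1) ^ r := by
          rw [ENNReal.mul_rpow_of_nonneg _ _ hp2'pos.le, ← ENNReal.rpow_mul]
          congr 1
          rw [hrdef]
          field_simp
  -- measurability of the intermediate integrand
  have hBm : Measurable fun x2 : ℝ => (∫⁻ t1 in Ioi (0 : ℝ), H (t1, x2) ^ p1) ^ r := by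
    apply Measurable.pow _ measurable_const
    exact Measurable.lintegral_prod_left' (hHm.pow measurable_const)
  calc (∫⁻ x2 in Ioi (0 : ℝ), (∫⁻ x1 in Ioi (0 : ℝ),
        (∫⁻ t1 in Ioi (0 : ℝ), ENNReal.ofReal (Real.exp (-(x1 * t1))) * H (t1, x2)) ^ p1')
        ^ (p2' / p1')) ^ (1 / p2')
      ≤ (∫⁻ x2 in Ioi (0 : ℝ),
          C1 ^ p2' * (∫⁻ t1 in Ioi (0 : ℝ), H (t1, x2) ^ p1) ^ r) ^ (1 / p2') :=
        ENNReal.rpow_le_rpow (lintegral_mono fun x2 => step1 x2) (by positivity)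
    _ = C1 * ((∫⁻ x2 in Ioi (0 : ℝ),
          (∫⁻ t1 in Ioi (0 : ℝ), H (t1, x2) ^ p1) ^ r) ^ (1 / r)) ^ (1 / p1) := by
        rw [lintegral_const_mul _ hBm,
          ENNReal.mul_rpow_of_nonneg _ _ (by positivity : (0:ℝ) ≤ 1/p2'),
          ← ENNReal.rpow_mul, mul_one_div_cancel hp2'pos.ne', ENNReal.rpow_one,
          ← ENNReal.rpow_mul]
        congr 2
        rw [hrdef]
        field_simp
    _ ≤ C1 * ((∫⁻ t1 in Ioi (0 : ℝ),
          (∫⁻ x2 in Ioi (0 : ℝ), (H (t1, x2) ^ p1) ^ r) ^ (1 / r))) ^ (1 / p1) := by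
        apply mul_le_mul_right
        apply ENNReal.rpow_le_rpow _ (by positivity)
        exact minkowski_lintegral _ _ hr1 (hHm.pow measurable_const)
    _ ≤ C1 * (C2 ^ p1 * (∫⁻ t1 in Ioi (0 : ℝ),
          (∫⁻ t2 in Ioi (0 : ℝ), f (t1, t2) ^ p2) ^ (p1 / p2))) ^ (1 / p1) := by
        apply mul_le_mul_right
        apply ENNReal.rpow_le_rpow _ (by positivity)
        -- pointwise bound in t1, via hL2
        have step3 : ∀ t1 : ℝ,
            (∫⁻ x2 in Ioi (0 : ℝ), (H (t1, x2) ^ p1) ^ r) ^ (1 / r)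
              ≤ C2 ^ p1 * (∫⁻ t2 in Ioi (0 : ℝ), f (t1, t2) ^ p2) ^ (p1 / p2) := by
          intro t1
          have hg2 : Measurable fun t2 => f (t1, t2) :=
            hf.comp (measurable_const.prodMk measurable_id)
          have h := hL2 (fun t2 => f (t1, t2)) hg2
          have e1 : ∀ x2 : ℝ, (H (t1, x2) ^ p1) ^ r = H (t1, x2) ^ p2' := by
            intro x2
            rw [← ENNReal.rpow_mul, hrdef]
            congr 1
            field_simp
          simp_rw [e1]
          calc (∫⁻ x2 in Ioi (0 : ℝ), H (t1, x2) ^ p2') ^ (1 / r)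
              = ((∫⁻ x2 in Ioi (0 : ℝ), H (t1, x2) ^ p2') ^ (1 / p2')) ^ p1 := by
                rw [← ENNReal.rpow_mul, hrdef]
                congr 1
                field_simp
            _ ≤ (C2 * (∫⁻ t2 in Ioi (0 : ℝ), f (t1, t2) ^ p2) ^ (1 / p2)) ^ p1 := by
                refine ENNReal.rpow_le_rpow ?_ hp1pos.le
                exact h
            _ = C2 ^ p1 * (∫⁻ t2 in Ioi (0 : ℝ), f (t1, t2) ^ p2) ^ (p1 / p2) := by
                rw [ENNReal.mul_rpow_of_nonneg _ _ hp1pos.le, ← ENNReal.rpow_mul]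
                congr 1
                field_simp
        calc (∫⁻ t1 in Ioi (0 : ℝ), (∫⁻ x2 in Ioi (0 : ℝ), (H (t1, x2) ^ p1) ^ r) ^ (1 / r))
            ≤ ∫⁻ t1 in Ioi (0 : ℝ),
                C2 ^ p1 * (∫⁻ t2 in Ioi (0 : ℝ), f (t1, t2) ^ p2) ^ (p1 / p2) :=
              lintegral_mono fun t1 => step3 t1
          _ = C2 ^ p1 * ∫⁻ t1 in Ioi (0 : ℝ),
                (∫⁻ t2 in Ioi (0 : ℝ), f (t1, t2) ^ p2) ^ (p1 / p2) := by
              apply lintegral_const_mul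
              apply Measurable.pow _ measurable_const
              exact Measurable.lintegral_prod_right' (hf.pow measurable_const)
    _ = C1 * C2 * (∫⁻ t1 in Ioi (0 : ℝ),
          (∫⁻ t2 in Ioi (0 : ℝ), f (t1, t2) ^ p2) ^ (p1 / p2)) ^ (1 / p1) := by
        rw [ENNReal.mul_rpow_of_nonneg _ _ (by positivity : (0:ℝ) ≤ 1/p1),
          ← ENNReal.rpow_mul, mul_one_div_cancel hp1pos.ne', ENNReal.rpow_one, mul_assoc]
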